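/- Let π be an n-profile with g₂ > g₁ (positive gap under mechanism M₂), with fractional weights W₁, W₂ defined as W₂ = Σᵢ max(0, min(g₂, πᵢ) − g₁)/(g₂ − g₁) and W₁ = n − W₂, and served sets S₁, S₂ from the lexicographically first optimal 1-D solution. Then for each ℓ ∈ {1,2}: |S_ℓ| + OPT(π)/(g₂ − g₁) ≥ W_ℓ. -/
import Mathlib

open scoped Classical

noncomputable def cost1 {n : ℕ} (π : Fin n → ℝ) (a b : ℝ) : ℝ :=
  ∑ i, min |π i - a| |π i - b|

def lexLE (p q : ℝ × ℝ) : Prop := p.1 < q.1 ∨ (p.1 = q.1 ∧ p.2 ≤ q.2)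

def LexOpt {n : ℕ} (π : Fin n → ℝ) (σ : ℝ × ℝ) : Prop :=
  σ.1 ≤ σ.2 ∧ (∀ a b : ℝ, a ≤ b → cost1 π σ.1 σ.2 ≤ cost1 π a b) ∧
  (∀ a b : ℝ, a ≤ b → cost1 π a b = cost1 π σ.1 σ.2 → lexLE σ (a, b))

/-- fractional weight of agent i toward the right facility -/
noncomputable def frac2 {n : ℕ} (π : Fin n → ℝ) (g1 g2 : ℝ) (i : Fin n) : ℝ :=
  max 0 (min g2 (π i) - g1) / (g2 - g1)

theorem stmt10 {n : ℕ} (hn : 2 ≤ n) (π : Fin n → ℝ) (hπ : Monotone π) (C : ℝ)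
    (hC : IsLeast {c : ℝ | ∃ a b : ℝ, a ≤ b ∧ cost1 π a b = c} C)
    (h1 h2 : ℝ)
    (hh1 : π ⟨0, by omega⟩ ≤ h1 ∧ (∑ i, max 0 (h1 - π i)) = C)
    (hh2 : h2 ≤ π ⟨n - 1, by omega⟩ ∧ (∑ i, max 0 (π i - h2)) = C)
    (g1 g2 : ℝ) (hg1 : g1 = min h1 ((∑ i, π i) / n)) (hg2 : g2 = max h2 ((∑ i, π i) / n))
    (hgap : g1 < g2)
    (σ : ℝ × ℝ) (hσ : LexOpt π σ) :
    ((Finset.univ.filter (fun i : Fin n => |π i - σ.1| ≤ |π i - σ.2|)).card : ℝ) + C / (g2 - g1)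
      ≥ (n : ℝ) - ∑ i, frac2 π g1 g2 i ∧
    ((n - (Finset.univ.filter (fun i : Fin n => |π i - σ.1| ≤ |π i - σ.2|)).card : ℕ) : ℝ)
      + C / (g2 - g1) ≥ ∑ i, frac2 π g1 g2 i := by
  have hn0 : (0:ℝ) < n := by positivity
  have hD : (0:ℝ) < g2 - g1 := by linarith
  have hσ12 : σ.1 ≤ σ.2 := hσ.1
  -- the optimal cost is C
  have hCσ : cost1 π σ.1 σ.2 = C := by
    obtain ⟨a, b, hab, habC⟩ := hC.1
    have h1' := hσ.2.1 a b hab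
    have h2' : C ≤ cost1 π σ.1 σ.2 := hC.2 ⟨σ.1, σ.2, hσ12, rfl⟩
    linarith
  set c : Fin n → ℝ := fun i => min |π i - σ.1| |π i - σ.2| with hc
  have hCsum : ∑ i, c i = C := hCσ
  have hcnn : ∀ i, 0 ≤ c i := fun i => le_min (abs_nonneg _) (abs_nonneg _)
  have hc2 : ∀ i, max 0 (π i - σ.2) ≤ c i := by
    intro i
    refine max_le (hcnn i) (le_min ?_ ?_)
    · have := le_abs_self (π i - σ.1); linarith
    · exact le_abs_self _
  have hc1 : ∀ i, max 0 (σ.1 - π i) ≤ c i := by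
    intro i
    refine max_le (hcnn i) (le_min ?_ ?_)
    · have := neg_abs_le (π i - σ.1); linarith
    · have := neg_abs_le (π i - σ.2); linarith
  -- h2 ≤ σ.2
  have hσ2 : h2 ≤ σ.2 := by
    by_contra hcon
    push_neg at hcon
    have hlt : ∑ i, max 0 (π i - h2) < ∑ i, max 0 (π i - σ.2) := by
      refine Finset.sum_lt_sum (fun i _ => max_le_max le_rfl (by linarith)) ?_
      refine ⟨⟨n-1, by omega⟩, Finset.mem_univ _, ?_⟩
      have h1' := hh2.1
      have : max 0 (π ⟨n-1, by omega⟩ - h2) = π ⟨n-1, by omega⟩ - h2 :=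
        max_eq_right (by linarith)
      rw [this]
      have : π ⟨n-1, by omega⟩ - σ.2 ≤ max 0 (π ⟨n-1, by omega⟩ - σ.2) := le_max_right _ _
      linarith
    have hle : ∑ i, max 0 (π i - σ.2) ≤ ∑ i, c i := Finset.sum_le_sum fun i _ => hc2 i
    rw [hCsum] at hle
    rw [hh2.2] at hlt
    linarith
  -- σ.1 ≤ h1
  have hσ1 : σ.1 ≤ h1 := by
    by_contra hcon
    push_neg at hcon
    have hlt : ∑ i, max 0 (h1 - π i) < ∑ i, max 0 (σ.1 - π i) := by
      refine Finset.sum_lt_sum (fun i _ => max_le_max le_rfl (by linarith)) ?_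
      refine ⟨⟨0, by omega⟩, Finset.mem_univ _, ?_⟩
      have h1' := hh1.1
      have : max 0 (h1 - π ⟨0, by omega⟩) = h1 - π ⟨0, by omega⟩ :=
        max_eq_right (by linarith)
      rw [this]
      have : σ.1 - π ⟨0, by omega⟩ ≤ max 0 (σ.1 - π ⟨0, by omega⟩) := le_max_right _ _
      linarith
    have hle : ∑ i, max 0 (σ.1 - π i) ≤ ∑ i, c i := Finset.sum_le_sum fun i _ => hc1 i
    rw [hCsum] at hle
    rw [hh1.2] at hlt
    linarith
  set e : Fin n → ℝ := fun i => max 0 (min g2 (π i) - g1) with he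
  have he0 : ∀ i, 0 ≤ e i := fun i => le_max_left _ _
  have heD : ∀ i, e i ≤ g2 - g1 := by
    intro i
    refine max_le hD.le ?_
    have := min_le_left g2 (π i); linarith
  have hfe : ∀ i, frac2 π g1 g2 i = e i / (g2 - g1) := fun i => rfl
  have hub1 : ∀ i, (g2 - g1) - e i ≤ max 0 (g2 - π i) := by
    intro i
    rcases le_total g2 (π i) with h | h
    · have h1' : min g2 (π i) = g2 := min_eq_left h
      have : e i = g2 - g1 := by rw [he]; simp only [h1']; exact max_eq_right hD.le
      rw [this]
      simp
    · have h1' : min g2 (π i) = π i := min_eq_right h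
      rcases le_total (π i) g1 with h2' | h2'
      · have : e i = 0 := by rw [he]; simp only [h1']; exact max_eq_left (by linarith)
        rw [this]
        have : g2 - g1 ≤ g2 - π i := by linarith
        exact le_trans (by linarith) (le_max_right _ _)
      · have : e i = π i - g1 := by rw [he]; simp only [h1']; exact max_eq_right (by linarith)
        rw [this]
        exact le_trans (by linarith) (le_max_right 0 (g2 - π i))
  have hub2 : ∀ i, e i ≤ max 0 (π i - g1) := by
    intro i
    refine max_le (le_max_left _ _) (le_trans ?_ (le_max_right _ _))
    have := min_le_right g2 (π i); linarith
  have habs : ∀ x y : ℝ, max 0 (y - x) + max 0 (x - y) = |x - y| := by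
    intro x y
    rcases le_total x y with h | h
    · rw [max_eq_right (by linarith), max_eq_left (by linarith), abs_of_nonpos (by linarith)]
      ring
    · rw [max_eq_left (by linarith), max_eq_right (by linarith), abs_of_nonneg (by linarith)]
      ring
  set p : Fin n → Prop := fun i => |π i - σ.1| ≤ |π i - σ.2| with hp
  set S : Finset (Fin n) := Finset.univ.filter p with hS
  set T : Finset (Fin n) := Finset.univ.filter (fun i => ¬ p i) with hT
  have hcS : ∀ i ∈ S, c i = |π i - σ.1| := by
    intro i hi
    have := (Finset.mem_filter.mp hi).2
    exact min_eq_left this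
  have hcT : ∀ i ∈ T, c i = |π i - σ.2| := by
    intro i hi
    have h' := (Finset.mem_filter.mp hi).2
    exact min_eq_right (le_of_not_ge h')
  have hsplit : ∀ f : Fin n → ℝ, ∑ i, f i = ∑ i ∈ S, f i + ∑ i ∈ T, f i := by
    intro f
    exact (Finset.sum_filter_add_sum_filter_not Finset.univ p f).symm
  have hcard : S.card + T.card = n := by
    have := Finset.card_filter_add_card_filter_not (s := Finset.univ) (p := p)
    simpa using this
  have hmean : (n : ℝ) * ((∑ i, π i) / n) = ∑ i, π i := by
    field_simp
  -- KEY1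
  have KEY1 : ∑ i ∈ T, ((g2 - g1) - e i) ≤ C := by
    by_cases hA : g2 ≤ σ.2
    · have hpt : ∀ i ∈ T, (g2 - g1) - e i ≤ c i := by
        intro i hi
        refine le_trans (hub1 i) ?_
        rw [hcT i hi]
        refine max_le (abs_nonneg _) ?_
        have := neg_abs_le (π i - σ.2); linarith
      calc ∑ i ∈ T, ((g2 - g1) - e i) ≤ ∑ i ∈ T, c i := Finset.sum_le_sum hpt
        _ ≤ ∑ i, c i := Finset.sum_le_sum_of_subset_of_nonneg (Finset.filter_subset _ _)
            (fun i _ _ => hcnn i)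
        _ = C := hCsum
    · push_neg at hA
      have hg2m : g2 = (∑ i, π i) / n := by
        rcases max_choice h2 ((∑ i, π i) / n) with h | h
        · rw [hg2] at hA ⊢; rw [h] at hA ⊢; linarith
        · rw [hg2, h]
      have step1 : ∀ i, (g2 - g1) - e i ≤ max 0 (σ.2 - π i) + (g2 - σ.2) := by
        intro i
        refine le_trans (hub1 i) (max_le ?_ ?_)
        · have := le_max_left (0:ℝ) (σ.2 - π i); linarith
        · have := le_max_right (0:ℝ) (σ.2 - π i); linarith
      have step2 : ∑ i ∈ T, ((g2 - g1) - e i) ≤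
          ∑ i ∈ T, max 0 (σ.2 - π i) + (T.card : ℝ) * (g2 - σ.2) := by
        have := Finset.sum_le_sum (fun i (hi : i ∈ T) => step1 i)
        rw [Finset.sum_add_distrib, Finset.sum_const, nsmul_eq_mul] at this
        exact this
      have hTn : (T.card : ℝ) ≤ n := by
        have : T.card ≤ n := by omega
        exact_mod_cast this
      have step3 : (T.card : ℝ) * (g2 - σ.2) ≤ (n : ℝ) * (g2 - σ.2) :=
        mul_le_mul_of_nonneg_right hTn (by linarith)
      have step4 : (n : ℝ) * (g2 - σ.2) ≤ ∑ i, max 0 (π i - σ.2) := by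
        have h1' : (n : ℝ) * (g2 - σ.2) = ∑ i, (π i - σ.2) := by
          rw [Finset.sum_sub_distrib, Finset.sum_const, Finset.card_univ, Fintype.card_fin,
            nsmul_eq_mul]
          rw [hg2m, mul_sub, hmean]
        rw [h1']
        exact Finset.sum_le_sum (fun i _ => le_max_right _ _)
      have step5 : ∑ i ∈ T, max 0 (σ.2 - π i) + ∑ i, max 0 (π i - σ.2) ≤ C := by
        rw [hsplit (fun i => max 0 (π i - σ.2))]
        have hT' : ∑ i ∈ T, max 0 (σ.2 - π i) + ∑ i ∈ T, max 0 (π i - σ.2)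
            = ∑ i ∈ T, c i := by
          rw [← Finset.sum_add_distrib]
          refine Finset.sum_congr rfl (fun i hi => ?_)
          rw [hcT i hi, habs]
        have hS' : ∑ i ∈ S, max 0 (π i - σ.2) ≤ ∑ i ∈ S, c i :=
          Finset.sum_le_sum (fun i _ => hc2 i)
        have : ∑ i ∈ S, c i + ∑ i ∈ T, c i = C := by
          rw [← hsplit c, hCsum]
        linarith
      linarith
  -- KEY2
  have KEY2 : ∑ i ∈ S, e i ≤ C := by
    by_cases hA : σ.1 ≤ g1
    · have hpt : ∀ i ∈ S, e i ≤ c i := by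
        intro i hi
        refine le_trans (hub2 i) ?_
        rw [hcS i hi]
        refine max_le (abs_nonneg _) ?_
        have := le_abs_self (π i - σ.1); linarith
      calc ∑ i ∈ S, e i ≤ ∑ i ∈ S, c i := Finset.sum_le_sum hpt
        _ ≤ ∑ i, c i := Finset.sum_le_sum_of_subset_of_nonneg (Finset.filter_subset _ _)
            (fun i _ _ => hcnn i)
        _ = C := hCsum
    · push_neg at hA
      have hg1m : g1 = (∑ i, π i) / n := by
        rcases min_choice h1 ((∑ i, π i) / n) with h | h
        · rw [hg1] at hA ⊢; rw [h] at hA ⊢; linarith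
        · rw [hg1, h]
      have step1 : ∀ i, e i ≤ max 0 (π i - σ.1) + (σ.1 - g1) := by
        intro i
        refine le_trans (hub2 i) (max_le ?_ ?_)
        · have := le_max_left (0:ℝ) (π i - σ.1); linarith
        · have := le_max_right (0:ℝ) (π i - σ.1); linarith
      have step2 : ∑ i ∈ S, e i ≤
          ∑ i ∈ S, max 0 (π i - σ.1) + (S.card : ℝ) * (σ.1 - g1) := by
        have := Finset.sum_le_sum (fun i (hi : i ∈ S) => step1 i)
        rw [Finset.sum_add_distrib, Finset.sum_const, nsmul_eq_mul] at this
        exact this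
      have hSn : (S.card : ℝ) ≤ n := by
        have : S.card ≤ n := by omega
        exact_mod_cast this
      have step3 : (S.card : ℝ) * (σ.1 - g1) ≤ (n : ℝ) * (σ.1 - g1) :=
        mul_le_mul_of_nonneg_right hSn (by linarith)
      have step4 : (n : ℝ) * (σ.1 - g1) ≤ ∑ i, max 0 (σ.1 - π i) := by
        have h1' : (n : ℝ) * (σ.1 - g1) = ∑ i, (σ.1 - π i) := by
          rw [Finset.sum_sub_distrib, Finset.sum_const, Finset.card_univ, Fintype.card_fin,
            nsmul_eq_mul]
          rw [hg1m, mul_sub, hmean]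
        rw [h1']
        exact Finset.sum_le_sum (fun i _ => le_max_right _ _)
      have step5 : ∑ i ∈ S, max 0 (π i - σ.1) + ∑ i, max 0 (σ.1 - π i) ≤ C := by
        rw [hsplit (fun i => max 0 (σ.1 - π i))]
        have hS' : ∑ i ∈ S, max 0 (π i - σ.1) + ∑ i ∈ S, max 0 (σ.1 - π i)
            = ∑ i ∈ S, c i := by
          rw [← Finset.sum_add_distrib]
          refine Finset.sum_congr rfl (fun i hi => ?_)
          rw [hcS i hi]
          rw [← habs]
          ring
        have hT' : ∑ i ∈ T, max 0 (σ.1 - π i) ≤ ∑ i ∈ T, c i :=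
          Finset.sum_le_sum (fun i _ => hc1 i)
        have : ∑ i ∈ S, c i + ∑ i ∈ T, c i = C := by
          rw [← hsplit c, hCsum]
        linarith
      linarith
  -- Assemble
  have hfracsplit : ∑ i, frac2 π g1 g2 i = ∑ i ∈ S, e i / (g2 - g1) + ∑ i ∈ T, e i / (g2 - g1) := by
    rw [show (fun i => frac2 π g1 g2 i) = fun i => e i / (g2 - g1) from funext hfe] at *
    exact hsplit _
  constructor
  · -- first goal
    have hTsum : ∑ i ∈ T, ((g2 - g1) - e i) = (T.card : ℝ) * (g2 - g1) - ∑ i ∈ T, e i := by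
      rw [Finset.sum_sub_distrib, Finset.sum_const, nsmul_eq_mul]
    have h1' : (T.card : ℝ) * (g2 - g1) - ∑ i ∈ T, e i ≤ C := by rw [← hTsum]; exact KEY1
    have hTfrac : (T.card : ℝ) - ∑ i ∈ T, e i / (g2 - g1) ≤ C / (g2 - g1) := by
      rw [← Finset.sum_div]
      have heq : ((T.card : ℝ) - (∑ i ∈ T, e i) / (g2 - g1))
          = ((T.card : ℝ) * (g2 - g1) - ∑ i ∈ T, e i) / (g2 - g1) := by
        field_simp
      rw [heq]
      exact (div_le_div_iff_of_pos_right hD).mpr h1'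
    have hSfrac : 0 ≤ ∑ i ∈ S, e i / (g2 - g1) :=
      Finset.sum_nonneg fun i _ => div_nonneg (he0 i) hD.le
    have hncast : (n : ℝ) = (S.card : ℝ) + (T.card : ℝ) := by exact_mod_cast hcard.symm
    rw [ge_iff_le, hfracsplit, hncast]
    linarith
  · have hncast : ((n - S.card : ℕ) : ℝ) = (T.card : ℝ) := by
      have : n - S.card = T.card := by omega
      rw [this]
    have hSfrac : ∑ i ∈ S, e i / (g2 - g1) ≤ C / (g2 - g1) := by
      rw [← Finset.sum_div]
      exact (div_le_div_iff_of_pos_right hD).mpr KEY2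
    have hTfrac : ∑ i ∈ T, e i / (g2 - g1) ≤ (T.card : ℝ) := by
      calc ∑ i ∈ T, e i / (g2 - g1) ≤ ∑ i ∈ T, (1:ℝ) :=
            Finset.sum_le_sum fun i _ => by
              rw [div_le_one hD]; exact heD i
        _ = (T.card : ℝ) := by rw [Finset.sum_const, nsmul_eq_mul, mul_one]
    rw [ge_iff_le, hfracsplit, hncast]
    linarith
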